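/- Let X(ℝ) be a translation-invariant Banach function space and w(x) = e^{cx} with c > 0. Then the weighted space X(ℝ, w) (with norm ‖f‖ = ‖fw‖_X) does not satisfy the weak doubling property; in fact, for each τ > 1, inf_{y∈ℝ} ‖χ_{B(y,τR)}‖_{X(ℝ,w)} / ‖χ_{B(y,R)}‖_{X(ℝ,w)} → ∞ as R → ∞. -/

import Mathlib

open MeasureTheory Filter ENNReal Metric

noncomputable section

/-- A Banach function norm on measurable functions over a measure space `α`,
following Bennett–Sharpley: axioms (A1)–(A5). -/
structure BanachFunctionNorm (α : Type) [MeasureSpace α] where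
  ρ : (α → ℝ≥0∞) → ℝ≥0∞
  ρ_zero : ∀ f, ρ f = 0 ↔ f =ᵐ[volume] 0
  ρ_smul : ∀ (a : NNReal) (f : α → ℝ≥0∞), ρ (fun x => (a : ℝ≥0∞) * f x) = a * ρ f
  ρ_add : ∀ f g, ρ (fun x => f x + g x) ≤ ρ f + ρ g
  ρ_mono : ∀ f g, (∀ᵐ x ∂volume, f x ≤ g x) → ρ f ≤ ρ g
  ρ_fatou : ∀ (f : ℕ → α → ℝ≥0∞),
      (∀ j, ∀ᵐ x ∂volume, f j x ≤ f (j+1) x) →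
      ρ (fun x => ⨆ j, f j x) = ⨆ j, ρ (f j)
  ρ_finite : ∀ E : Set α, MeasurableSet E → volume E < ⊤ → ρ (E.indicator 1) < ⊤
  ρ_loc_embed : ∀ E : Set α, MeasurableSet E → volume E < ⊤ →
      ∃ C : ℝ≥0∞, C < ⊤ ∧ ∀ f : α → ℝ≥0∞, ∫⁻ x in E, f x ∂volume ≤ C * ρ f

/-- The associate (Köthe dual) norm of a Banach function norm. -/
def BanachFunctionNorm.associate {α : Type} [MeasureSpace α]
    (X : BanachFunctionNorm α) (g : α → ℝ≥0∞) : ℝ≥0∞ :=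
  ⨆ f ∈ {f : α → ℝ≥0∞ | X.ρ f ≤ 1}, ∫⁻ x, f x * g x ∂volume

lemma aux_translate (X : BanachFunctionNorm ℝ)
    (hTI : ∀ (y : ℝ) (f : ℝ → ℝ≥0∞), X.ρ (fun x => f (x - y)) = X.ρ f)
    (c s y R : ℝ) :
    X.ρ ((Metric.ball (y + s) R).indicator fun x => ENNReal.ofReal (Real.exp (c * x))) =
      ENNReal.ofReal (Real.exp (c * s)) *
        X.ρ ((Metric.ball y R).indicator fun x => ENNReal.ofReal (Real.exp (c * x))) := by
  have key : ((Metric.ball (y + s) R).indicator fun x => ENNReal.ofReal (Real.exp (c * x))) =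
      fun x => ((Real.exp (c * s)).toNNReal : ℝ≥0∞) *
        ((Metric.ball y R).indicator (fun x' => ENNReal.ofReal (Real.exp (c * x')))) (x - s) := by
    funext x
    have hiff : x - s ∈ Metric.ball y R ↔ x ∈ Metric.ball (y + s) R := by
      simp only [Metric.mem_ball, Real.dist_eq]
      constructor <;> intro h <;> [skip; skip] <;>
        · have : x - s - y = x - (y + s) := by ring
          simp_all [this]
    by_cases hx : x ∈ Metric.ball (y + s) R
    · rw [Set.indicator_of_mem hx, Set.indicator_of_mem (hiff.mpr hx)]
      show ENNReal.ofReal (Real.exp (c * x)) =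
        ENNReal.ofReal (Real.exp (c * s)) * ENNReal.ofReal (Real.exp (c * (x - s)))
      rw [← ENNReal.ofReal_mul (Real.exp_pos _).le, ← Real.exp_add]
      ring_nf
    · rw [Set.indicator_of_notMem hx, Set.indicator_of_notMem (fun h => hx (hiff.mp h)),
        mul_zero]
  rw [key, X.ρ_smul, hTI]
  rfl

lemma aux_den_ne_zero (X : BanachFunctionNorm ℝ) (c y R : ℝ) (hR : 0 < R) :
    X.ρ ((Metric.ball y R).indicator fun x => ENNReal.ofReal (Real.exp (c * x))) ≠ 0 := by
  rw [Ne, X.ρ_zero]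
  intro h
  rw [Filter.EventuallyEq, ae_iff] at h
  have hsub : Metric.ball y R ⊆
      {x | ¬ ((Metric.ball y R).indicator fun x => ENNReal.ofReal (Real.exp (c * x))) x = (0 : ℝ → ℝ≥0∞) x} := by
    intro x hx
    simp only [Set.mem_setOf_eq, Set.indicator_of_mem hx, Pi.zero_apply,
      ENNReal.ofReal_eq_zero, not_le]
    exact Real.exp_pos _
  have := measure_mono_null hsub h
  rw [Real.volume_ball] at this
  simp [ENNReal.ofReal_eq_zero] at this
  linarith

lemma aux_den_ne_top (X : BanachFunctionNorm ℝ) (c y R : ℝ) (hc : 0 < c) :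
    X.ρ ((Metric.ball y R).indicator fun x => ENNReal.ofReal (Real.exp (c * x))) ≠ ⊤ := by
  have hle : ∀ x, ((Metric.ball y R).indicator fun x => ENNReal.ofReal (Real.exp (c * x))) x ≤
      ((Real.exp (c * (y + R))).toNNReal : ℝ≥0∞) * (Metric.ball y R).indicator 1 x := by
    intro x
    by_cases hx : x ∈ Metric.ball y R
    · rw [Set.indicator_of_mem hx, Set.indicator_of_mem hx, Pi.one_apply, mul_one]
      show ENNReal.ofReal (Real.exp (c * x)) ≤ ENNReal.ofReal (Real.exp (c * (y + R)))
      apply ENNReal.ofReal_le_ofReal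
      apply Real.exp_le_exp.mpr
      have : x < y + R := by
        have := hx
        rw [Metric.mem_ball, Real.dist_eq, abs_lt] at this
        linarith [this.1, this.2]
      nlinarith
    · simp [Set.indicator_of_notMem hx]
  have h1 : X.ρ ((Metric.ball y R).indicator fun x => ENNReal.ofReal (Real.exp (c * x))) ≤
      ((Real.exp (c * (y + R))).toNNReal : ℝ≥0∞) * X.ρ ((Metric.ball y R).indicator 1) := by
    rw [← X.ρ_smul]
    exact X.ρ_mono _ _ (Filter.Eventually.of_forall hle)
  have h2 : X.ρ ((Metric.ball y R).indicator 1) < ⊤ :=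
    X.ρ_finite _ measurableSet_ball (by rw [Real.volume_ball]; exact ENNReal.ofReal_lt_top)
  exact (h1.trans_lt (ENNReal.mul_lt_top ENNReal.coe_lt_top h2)).ne

/-- For a translation-invariant Banach function space `X(ℝ)` and the weight `w(x) = e^{cx}`,
`c > 0`, the weighted space `X(ℝ,w)` fails the weak doubling property; in fact, for each
`τ > 1` the infimum over `y` of the ratios of the norms of the indicators of the concentric
balls of radii `τR` and `R` tends to infinity as `R → ∞`. -/
theorem exp_weight_fails_weak_doubling (X : BanachFunctionNorm ℝ)
    (hTI : ∀ (y : ℝ) (f : ℝ → ℝ≥0∞), X.ρ (fun x => f (x - y)) = X.ρ f)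
    (c : ℝ) (hc : 0 < c) :
    (∀ τ : ℝ, 1 < τ →
      Filter.Tendsto (fun R : ℝ => ⨅ y : ℝ,
        X.ρ ((Metric.ball y (τ * R)).indicator fun x => ENNReal.ofReal (Real.exp (c * x))) /
        X.ρ ((Metric.ball y R).indicator fun x => ENNReal.ofReal (Real.exp (c * x))))
        Filter.atTop (nhds ⊤)) ∧
    ¬ (∃ τ : ℝ, 1 < τ ∧
      Filter.liminf (fun R : ℝ => ⨅ y : ℝ,
        X.ρ ((Metric.ball y (τ * R)).indicator fun x => ENNReal.ofReal (Real.exp (c * x))) /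
        X.ρ ((Metric.ball y R).indicator fun x => ENNReal.ofReal (Real.exp (c * x))))
        Filter.atTop < ⊤) := by
  have main : ∀ τ : ℝ, 1 < τ →
      Filter.Tendsto (fun R : ℝ => ⨅ y : ℝ,
        X.ρ ((Metric.ball y (τ * R)).indicator fun x => ENNReal.ofReal (Real.exp (c * x))) /
        X.ρ ((Metric.ball y R).indicator fun x => ENNReal.ofReal (Real.exp (c * x))))
        Filter.atTop (nhds ⊤) := by
    intro τ hτ
    apply tendsto_nhds_top_mono (f := fun R : ℝ => ENNReal.ofReal (Real.exp (c * ((τ - 1) * R))))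
    · have h1 : Filter.Tendsto (fun R : ℝ => c * ((τ - 1) * R)) atTop atTop := by
        have heq : (fun R : ℝ => c * ((τ - 1) * R)) = fun R : ℝ => (c * (τ - 1)) * R := by
          funext R; ring
        rw [heq]
        exact Filter.Tendsto.const_mul_atTop (by nlinarith) tendsto_id
      exact ENNReal.tendsto_ofReal_atTop.comp (Real.tendsto_exp_atTop.comp h1)
    · filter_upwards [eventually_gt_atTop (0 : ℝ)] with R hR
      apply le_iInf
      intro y
      set s : ℝ := (τ - 1) * R with hs
      have hs0 : 0 ≤ s := by nlinarith
      have hsub : Metric.ball (y + s) R ⊆ Metric.ball y (τ * R) := by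
        intro z hz
        rw [Metric.mem_ball, Real.dist_eq] at hz ⊢
        have h1 : |z - y| ≤ |z - (y + s)| + |s| := by
          calc |z - y| = |(z - (y + s)) + s| := by ring_nf
          _ ≤ |z - (y + s)| + |s| := abs_add_le _ _
        rw [abs_of_nonneg hs0] at h1
        have : s = (τ - 1) * R := hs
        nlinarith
      have hmono : X.ρ ((Metric.ball (y + s) R).indicator
            fun x => ENNReal.ofReal (Real.exp (c * x))) ≤
          X.ρ ((Metric.ball y (τ * R)).indicator
            fun x => ENNReal.ofReal (Real.exp (c * x))) := by
        apply X.ρ_mono _ _ (Filter.Eventually.of_forall ?_)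
        exact Set.indicator_le_indicator_of_subset hsub (fun _ => zero_le)
      rw [aux_translate X hTI c s y R] at hmono
      rw [ENNReal.le_div_iff_mul_le (Or.inl (aux_den_ne_zero X c y R hR))
        (Or.inl (aux_den_ne_top X c y R hc))]
      exact hmono
  refine ⟨main, ?_⟩
  rintro ⟨τ, hτ, hlt⟩
  have h := (main τ hτ).liminf_eq
  rw [h] at hlt
  exact lt_irrefl _ hlt
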